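/- Define the operator A on g by A := ½ ad_{Ω₊}∘(ad_{Ω₋} + ad_{Ω₊}∘c) + ½(ad_{Ω₀} − ad_{Λ₀}), where {Ω₀,Ω₊,Ω₋} is an sl₂-triple with Ω₋ = −c(Ω₊), c(Ω₀) = −Ω₀, and Λ₀ satisfies c(Λ₀) = −Λ₀. Then A is symmetric with respect to the real inner product ⟨X|Y⟩ = −Re κ(c(X),Y): ⟨X | AY⟩ = ⟨AX | Y⟩ for all X, Y ∈ g. -/

import Mathlib

open LinearMap in
/-- Trace of a conjugated endomorphism equals the conjugate of the trace. -/
lemma aux_trace_conj {M : Type*} [AddCommGroup M] [Module ℂ M] [Module.Finite ℂ M]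
    (c : M → M)
    (hc_add : ∀ x y : M, c (x + y) = c x + c y)
    (hc_smul : ∀ (a : ℂ) (x : M), c (a • x) = (starRingEnd ℂ a) • c x)
    (hc_inv : ∀ x : M, c (c x) = x)
    (f g : M →ₗ[ℂ] M) (hgapp : ∀ z, g z = c (f (c z))) :
    trace ℂ M g = starRingEnd ℂ (trace ℂ M f) := by
  classical
  have hc0 : c 0 = 0 := by
    have := hc_smul 0 0; simpa using this
  let b := Module.Free.chooseBasis ℂ M
  set ι := Module.Free.ChooseBasisIndex ℂ M
  have hcsum : ∀ (v : ι → M), c (∑ i, v i) = ∑ i, c (v i) := by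
    intro v
    exact map_sum (AddMonoidHom.mk' c hc_add) v Finset.univ
  -- the conjugated family is a basis
  have hli : LinearIndependent ℂ (fun i : ι => c (b i)) := by
    rw [Fintype.linearIndependent_iff]
    intro gg hgg i
    have h0 : c (∑ i, gg i • c (b i)) = 0 := by rw [hgg, hc0]
    have : (∑ i, (starRingEnd ℂ (gg i)) • (b i)) = 0 := by
      rw [← h0, hcsum]
      refine Finset.sum_congr rfl fun j _ => ?_
      rw [hc_smul, hc_inv]
    have := Fintype.linearIndependent_iff.mp b.linearIndependent _ this i
    simpa using congrArg (starRingEnd ℂ) this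
  have hsp : ⊤ ≤ Submodule.span ℂ (Set.range fun i : ι => c (b i)) := by
    intro x _
    have hx : x = c (∑ i, (b.repr (c x)) i • b i) := by
      rw [b.sum_repr (c x), hc_inv]
    rw [hx, hcsum]
    refine Submodule.sum_mem _ fun i _ => ?_
    rw [hc_smul]
    exact Submodule.smul_mem _ _ (Submodule.subset_span ⟨i, rfl⟩)
  let bc : Module.Basis ι ℂ M := Module.Basis.mk hli hsp
  have hbc : ∀ i, bc i = c (b i) := fun i => Module.Basis.mk_apply hli hsp i
  -- compute both traces diagonally
  rw [trace_eq_matrix_trace ℂ b f, trace_eq_matrix_trace ℂ bc g, Matrix.trace, Matrix.trace]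
  rw [map_sum]
  refine Finset.sum_congr rfl fun i _ => ?_
  simp only [Matrix.diag_apply, toMatrix_apply]
  have key : g (bc i) = ∑ j, (starRingEnd ℂ ((b.repr (f (b i))) j)) • bc j := by
    rw [hgapp, hbc, hc_inv]
    conv_lhs => rw [← b.sum_repr (f (b i))]
    rw [hcsum]
    refine Finset.sum_congr rfl fun j _ => ?_
    rw [hc_smul, hbc]
  rw [key]
  rw [map_sum]
  simp only [map_smul, Module.Basis.repr_self, Finsupp.smul_single, smul_eq_mul, mul_one,
    Finsupp.coe_finset_sum, Finset.sum_apply, Finsupp.single_apply]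
  simp [Finset.sum_ite_eq']


/-- The operator
`A := ½ ad_{Ω₊}∘(ad_{Ω₋} + ad_{Ω₊}∘c) + ½(ad_{Ω₀} − ad_{Λ₀})`,
where `{Ω₀,Ω₊,Ω₋}` is an sl₂-triple with `Ω₋ = −c(Ω₊)`, `c(Ω₀) = −Ω₀`,
`c(Λ₀) = −Λ₀`, is symmetric for the compact-real-form inner product
`⟨X|Y⟩ = −Re κ(c X, Y)`: `⟨X | A Y⟩ = ⟨A X | Y⟩` for all `X, Y`. -/
theorem stmt11
    (L : Type*) [LieRing L] [LieAlgebra ℂ L] [Module.Finite ℂ L]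
    [LieAlgebra.IsSemisimple ℂ L]
    (c : L → L)
    (hc_add : ∀ x y : L, c (x + y) = c x + c y)
    (hc_smul : ∀ (a : ℂ) (x : L), c (a • x) = (starRingEnd ℂ a) • c x)
    (hc_bracket : ∀ x y : L, c ⁅x, y⁆ = ⁅c x, c y⁆)
    (hc_inv : ∀ x : L, c (c x) = x)
    (B : L → L → ℝ)
    (hB : ∀ X Y : L, B X Y = -(killingForm ℂ L (c X) Y).re)
    (Λ₀ Ω₀ Ωp Ωm : L)
    (hΩm : Ωm = -(c Ωp))
    (hΩ₀c : c Ω₀ = -Ω₀)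
    (hΛ₀c : c Λ₀ = -Λ₀)
    (h1 : ⁅Ω₀, Ωp⁆ = (2 : ℂ) • Ωp)
    (h2 : ⁅Ω₀, Ωm⁆ = (-2 : ℂ) • Ωm)
    (h3 : ⁅Ωp, Ωm⁆ = Ω₀)
    (A : L → L)
    (hA : ∀ X : L, A X =
      (1 / 2 : ℂ) • ⁅Ωp, ⁅Ωm, X⁆ + ⁅Ωp, c X⁆⁆ +
        (1 / 2 : ℂ) • (⁅Ω₀, X⁆ - ⁅Λ₀, X⁆)) :
    ∀ X Y : L, B X (A Y) = B (A X) Y := by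
  intro X Y
  have hcneg : ∀ x : L, c (-x) = -c x := by
    intro x
    have := hc_smul (-1) x
    simpa using this
  have hcΩp : c Ωp = -Ωm := by rw [hΩm, neg_neg]
  have hcΩm : c Ωm = -Ωp := by rw [hΩm, hcneg, hc_inv]
  have swap2 : ∀ a b d : L, ⁅⁅a, b⁆, d⁆ = ⁅d, ⁅b, a⁆⁆ := by
    intro a b d
    rw [← lie_skew ⁅a, b⁆ d, ← lie_skew b a, lie_neg]
  have hconj : ∀ U V : L, killingForm ℂ L (c U) (c V) =
      starRingEnd ℂ (killingForm ℂ L U V) := by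
    intro U V
    rw [killingForm_apply_apply, killingForm_apply_apply]
    refine aux_trace_conj c hc_add hc_smul hc_inv _ _ ?_
    intro z
    simp only [LinearMap.comp_apply, LieAlgebra.ad_apply]
    rw [hc_bracket, hc_bracket, hc_inv]
  have inv : ∀ a b y : L, killingForm ℂ L a ⁅b, y⁆ = killingForm ℂ L ⁅a, b⁆ y :=
    fun a b y => (LieModule.traceForm_apply_lie_apply ℂ L L a b y).symm
  have harg1 : c ⁅Ωp, ⁅Ωm, X⁆⁆ = ⁅⁅c X, Ωp⁆, Ωm⁆ := by
    rw [hc_bracket, hc_bracket, hcΩp, hcΩm, swap2 (c X) Ωp Ωm]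
    simp only [neg_lie, lie_neg, neg_neg]
  have e1 : killingForm ℂ L (c X) ⁅Ωp, ⁅Ωm, Y⁆⁆ =
      killingForm ℂ L (c ⁅Ωp, ⁅Ωm, X⁆⁆) Y := by
    rw [inv, inv, harg1]
  have e2 : (killingForm ℂ L (c X) ⁅Ωp, ⁅Ωp, c Y⁆⁆).re =
      (killingForm ℂ L (c ⁅Ωp, ⁅Ωp, c X⁆⁆) Y).re := by
    have l1 : killingForm ℂ L (c X) ⁅Ωp, ⁅Ωp, c Y⁆⁆ =
        killingForm ℂ L ⁅⁅c X, Ωp⁆, Ωp⁆ (c Y) := by rw [inv, inv]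
    have l2 : killingForm ℂ L ⁅⁅c X, Ωp⁆, Ωp⁆ (c Y) =
        starRingEnd ℂ (killingForm ℂ L (c ⁅⁅c X, Ωp⁆, Ωp⁆) Y) := by
      conv_lhs => rw [← hc_inv ⁅⁅c X, Ωp⁆, Ωp⁆]
      exact hconj _ _
    have l3 : c ⁅⁅c X, Ωp⁆, Ωp⁆ = c ⁅Ωp, ⁅Ωp, c X⁆⁆ :=
      congrArg c (swap2 (c X) Ωp Ωp)
    rw [l1, l2, l3, Complex.conj_re]
  have harg3 : c ⁅Ω₀, X⁆ = ⁅c X, Ω₀⁆ := by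
    rw [hc_bracket, hΩ₀c, neg_lie]
    exact lie_skew (c X) Ω₀
  have e3 : killingForm ℂ L (c X) ⁅Ω₀, Y⁆ = killingForm ℂ L (c ⁅Ω₀, X⁆) Y := by
    rw [inv, harg3]
  have harg4 : c ⁅Λ₀, X⁆ = ⁅c X, Λ₀⁆ := by
    rw [hc_bracket, hΛ₀c, neg_lie]
    exact lie_skew (c X) Λ₀
  have e4 : killingForm ℂ L (c X) ⁅Λ₀, Y⁆ = killingForm ℂ L (c ⁅Λ₀, X⁆) Y := by
    rw [inv, harg4]
  have hsub : ∀ u v : L, c (u - v) = c u - c v := by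
    intro u v
    rw [sub_eq_add_neg, hc_add, hcneg, sub_eq_add_neg]
  have hhalf : (starRingEnd ℂ) (1 / 2 : ℂ) = 1 / 2 := by
    rw [show (1 / 2 : ℂ) = ((1 / 2 : ℝ) : ℂ) by norm_num, Complex.conj_ofReal]
  have expandY : killingForm ℂ L (c X) (A Y) =
      (1 / 2 : ℂ) * (killingForm ℂ L (c X) ⁅Ωp, ⁅Ωm, Y⁆⁆ +
        killingForm ℂ L (c X) ⁅Ωp, ⁅Ωp, c Y⁆⁆) +
      (1 / 2 : ℂ) * (killingForm ℂ L (c X) ⁅Ω₀, Y⁆ -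
        killingForm ℂ L (c X) ⁅Λ₀, Y⁆) := by
    rw [hA]
    simp only [lie_add, map_add, map_smul, map_sub, smul_eq_mul]
    try ring
  have expandX : killingForm ℂ L (c (A X)) Y =
      (1 / 2 : ℂ) * (killingForm ℂ L (c ⁅Ωp, ⁅Ωm, X⁆⁆) Y +
        killingForm ℂ L (c ⁅Ωp, ⁅Ωp, c X⁆⁆) Y) +
      (1 / 2 : ℂ) * (killingForm ℂ L (c ⁅Ω₀, X⁆) Y -
        killingForm ℂ L (c ⁅Λ₀, X⁆) Y) := by
    rw [hA, lie_add]
    rw [hc_add, hc_smul, hc_smul, hc_add, hsub, hhalf]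
    simp only [map_add, map_smul, map_sub, LinearMap.add_apply, LinearMap.smul_apply,
      LinearMap.sub_apply, smul_eq_mul]
    try ring
  rw [hB, hB, expandY, expandX, e1, e3, e4]
  simp only [Complex.add_re, Complex.sub_re, Complex.mul_re, Complex.add_im, Complex.sub_im]
  have h2re : (1 / 2 : ℂ).re = 1 / 2 := by norm_num
  have h2im : (1 / 2 : ℂ).im = 0 := by norm_num
  rw [h2re, h2im]
  ring_nf
  linarith [e2]
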